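/- Let X be a nonzero Banach space. Then: (i) B(X, ℓ_∞) has the ball-covering property if and only if X* has the ball-covering property; (ii) B(X, c_0) has the ball-covering property if and only if X* has the ball-covering property. -/

import Mathlib

open Metric ZeroAtInfty
open scoped ENNReal

/-- A normed space has the ball-covering property (BCP) if there is a countable family of
closed balls, none containing the origin (`0 < r n < ‖c n‖`), covering the unit sphere. -/
def HasBCP (X : Type*) [NormedAddCommGroup X] : Prop :=
  ∃ (c : ℕ → X) (r : ℕ → ℝ),
    (∀ n, 0 < r n ∧ r n < ‖c n‖) ∧
    sphere (0 : X) 1 ⊆ ⋃ n, closedBall (c n) (r n)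

/-- The strong ball-covering property: the radii are uniformly bounded above. -/
def HasSBCP (X : Type*) [NormedAddCommGroup X] : Prop :=
  ∃ (c : ℕ → X) (r : ℕ → ℝ),
    (∀ n, 0 < r n ∧ r n < ‖c n‖) ∧
    (∃ M : ℝ, ∀ n, r n ≤ M) ∧
    sphere (0 : X) 1 ⊆ ⋃ n, closedBall (c n) (r n)

/-- The uniform ball-covering property: strong BCP together with a closed ball around the
origin disjoint from all the balls of the covering. -/
def HasUBCP (X : Type*) [NormedAddCommGroup X] : Prop :=
  ∃ (c : ℕ → X) (r : ℕ → ℝ),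
    (∀ n, 0 < r n ∧ r n < ‖c n‖) ∧
    (∃ M : ℝ, ∀ n, r n ≤ M) ∧
    (∃ ρ : ℝ, 0 < ρ ∧ ∀ n, Disjoint (closedBall (0 : X) ρ) (closedBall (c n) (r n))) ∧
    sphere (0 : X) 1 ⊆ ⋃ n, closedBall (c n) (r n)

/-- A topological space has a countable π-basis if there is a countable family of nonempty
open sets such that every nonempty open set contains a member of the family. -/
def HasCountablePiBasis (K : Type*) [TopologicalSpace K] : Prop :=
  ∃ B : Set (Set K), B.Countable ∧ (∀ U ∈ B, IsOpen U ∧ U.Nonempty) ∧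
    ∀ V : Set K, IsOpen V → V.Nonempty → ∃ U ∈ B, U ⊆ V

section Aux

variable {X : Type*} [NormedAddCommGroup X]

theorem hasBCP_elim (h : HasBCP X) :
    ∃ c : ℕ → X, ∀ x ∈ sphere (0 : X) 1, ∃ n, ‖x - c n‖ < ‖c n‖ := by
  obtain ⟨c, r, hr, hcov⟩ := h
  refine ⟨c, fun x hx => ?_⟩
  obtain ⟨n, hn⟩ := Set.mem_iUnion.1 (hcov hx)
  exact ⟨n, lt_of_le_of_lt (by simpa [dist_eq_norm] using hn) (hr n).2⟩

theorem hasBCP_intro (x0 : X) (hx0 : x0 ≠ 0) (c : ℕ → X)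
    (h : ∀ x ∈ sphere (0 : X) 1, ∃ n, ‖x - c n‖ < ‖c n‖) : HasBCP X := by
  classical
  have hx0' : 0 < ‖x0‖ := norm_pos_iff.2 hx0
  let e := Denumerable.eqv (ℕ × ℕ)
  refine ⟨fun m => if c (e.symm m).1 = 0 then x0 else c (e.symm m).1,
    fun m => if c (e.symm m).1 = 0 then ‖x0‖ / 2
      else max (‖c (e.symm m).1‖ - 1 / ((e.symm m).2 + 1)) (‖c (e.symm m).1‖ / 2),
    fun m => ?_, fun x hx => ?_⟩
  · by_cases hc : c (e.symm m).1 = 0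
    · simp only [hc, if_pos rfl, if_true]
      exact ⟨half_pos hx0', half_lt_self hx0'⟩
    · have hcpos : 0 < ‖c (e.symm m).1‖ := norm_pos_iff.2 hc
      simp only [hc, if_false, if_neg hc]
      refine ⟨lt_of_lt_of_le (half_pos hcpos) (le_max_right _ _), ?_⟩
      refine max_lt ?_ (half_lt_self hcpos)
      have hp : (0:ℝ) < 1 / (((e.symm m).2 : ℝ) + 1) := by positivity
      linarith
  · obtain ⟨n, hn⟩ := h x hx
    have hcn : c n ≠ 0 := by
      intro h0
      rw [h0, norm_zero] at hn
      exact absurd hn (norm_nonneg _).not_gt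
    obtain ⟨i, hi⟩ := exists_nat_one_div_lt (sub_pos.2 hn)
    have hgoal : ‖x - c n‖ ≤ ‖c n‖ - 1 / ((i : ℝ) + 1) := by linarith
    refine Set.mem_iUnion.2 ⟨e (n, i), ?_⟩
    have he : e.symm (e (n, i)) = (n, i) := e.symm_apply_apply _
    simp only [he, if_neg hcn, mem_closedBall, dist_eq_norm]
    exact le_max_of_le_left hgoal

end Aux

/-- A coordinate system on `Y`, abstracting both `ℓ_∞` and `c₀`. -/
structure CoordSys (Y : Type*) [NormedAddCommGroup Y] [NormedSpace ℝ Y] where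
  eval : ℕ → Y →L[ℝ] ℝ
  single : ℕ → ℝ →L[ℝ] Y
  eval_single_same : ∀ k a, eval k (single k a) = a
  eval_single_ne : ∀ {j k : ℕ} (a : ℝ), j ≠ k → eval j (single k a) = 0
  norm_eval_apply_le : ∀ k y, ‖eval k y‖ ≤ ‖y‖
  norm_single_le : ∀ k a, ‖single k a‖ ≤ ‖a‖
  norm_le_of_forall : ∀ (y : Y) (t : ℝ), 0 ≤ t → (∀ k, ‖eval k y‖ ≤ t) → ‖y‖ ≤ t

namespace CoordSys

variable {Y : Type*} [NormedAddCommGroup Y] [NormedSpace ℝ Y] {S : CoordSys Y}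
variable {X : Type*} [NormedAddCommGroup X] [NormedSpace ℝ X]

theorem exists_coord (S : CoordSys Y) (y : Y) {t : ℝ} (ht : t < ‖y‖) : ∃ k, t < ‖S.eval k y‖ := by
  by_contra hcon
  push_neg at hcon
  have h0 : 0 ≤ t := le_trans (norm_nonneg _) (hcon 0)
  exact absurd (S.norm_le_of_forall y t h0 hcon) (not_le.2 ht)

theorem norm_comp_eval_le (S : CoordSys Y) (k : ℕ) (T : X →L[ℝ] Y) : ‖(S.eval k).comp T‖ ≤ ‖T‖ := by
  refine ContinuousLinearMap.opNorm_le_bound _ (norm_nonneg T) fun x => ?_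
  calc ‖(S.eval k).comp T x‖ = ‖S.eval k (T x)‖ := rfl
    _ ≤ ‖T x‖ := S.norm_eval_apply_le k (T x)
    _ ≤ ‖T‖ * ‖x‖ := T.le_opNorm x

theorem opNorm_le (S : CoordSys Y) (T : X →L[ℝ] Y) (t : ℝ) (ht : 0 ≤ t)
    (h : ∀ k, ‖(S.eval k).comp T‖ ≤ t) : ‖T‖ ≤ t := by
  refine ContinuousLinearMap.opNorm_le_bound _ ht fun x => ?_
  refine S.norm_le_of_forall (T x) (t * ‖x‖) (by positivity) fun k => ?_
  calc ‖S.eval k (T x)‖ = ‖(S.eval k).comp T x‖ := rfl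
    _ ≤ ‖(S.eval k).comp T‖ * ‖x‖ := ContinuousLinearMap.le_opNorm _ _
    _ ≤ t * ‖x‖ := mul_le_mul_of_nonneg_right (h k) (norm_nonneg x)

theorem forward (S : CoordSys Y) [Nontrivial X] (hB : HasBCP (X →L[ℝ] Y)) :
    HasBCP (StrongDual ℝ X) := by
  obtain ⟨D, hD⟩ := hasBCP_elim hB
  obtain ⟨x, hx⟩ := exists_ne (0 : X)
  obtain ⟨g, hg1, -⟩ := exists_dual_vector ℝ x (norm_ne_zero_iff.2 hx)
  have hgne : g ≠ 0 := by
    intro h; rw [h, norm_zero] at hg1; norm_num at hg1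
  refine hasBCP_intro g hgne (fun n => (S.eval 0).comp (D n)) (fun f hf => ?_)
  have hfnorm : ‖f‖ = 1 := by simpa using hf
  set F : X →L[ℝ] Y := (S.single 0).comp f with hFdef
  have hPhiF : (S.eval 0).comp F = f := by
    ext z
    simp [hFdef, S.eval_single_same]
  have hF1 : ‖F‖ = 1 := by
    refine le_antisymm ?_ ?_
    · refine ContinuousLinearMap.opNorm_le_bound _ zero_le_one fun z => ?_
      calc ‖F z‖ = ‖S.single 0 (f z)‖ := rfl
        _ ≤ ‖f z‖ := S.norm_single_le 0 (f z)
        _ ≤ ‖f‖ * ‖z‖ := f.le_opNorm z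
        _ = 1 * ‖z‖ := by rw [hfnorm]
    · calc (1:ℝ) = ‖f‖ := hfnorm.symm
        _ = ‖(S.eval 0).comp F‖ := by rw [hPhiF]
        _ ≤ ‖F‖ := S.norm_comp_eval_le 0 F
  obtain ⟨n, hn⟩ := hD F (by simp [mem_sphere_zero_iff_norm, hF1])
  have h1 : ‖f - (S.eval 0).comp (D n)‖ ≤ ‖F - D n‖ := by
    have heq : f - (S.eval 0).comp (D n) = (S.eval 0).comp (F - D n) := by
      rw [ContinuousLinearMap.comp_sub, hPhiF]
    rw [heq]
    exact S.norm_comp_eval_le 0 (F - D n)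
  have h2 : ∀ j, ‖(S.eval j).comp (D n)‖ ≤ max ‖(S.eval 0).comp (D n)‖ ‖F - D n‖ := by
    intro j
    rcases eq_or_ne j 0 with rfl | hj
    · exact le_max_left _ _
    · have hzero : (S.eval j).comp F = 0 := by
        ext z
        simp [hFdef, S.eval_single_ne _ hj]
      have heq : (S.eval j).comp (D n) = -((S.eval j).comp (F - D n)) := by
        rw [ContinuousLinearMap.comp_sub, hzero, zero_sub, neg_neg]
      rw [heq, norm_neg]
      exact le_max_of_le_right (S.norm_comp_eval_le j (F - D n))
  have h3 : ‖D n‖ ≤ max ‖(S.eval 0).comp (D n)‖ ‖F - D n‖ :=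
    S.opNorm_le (D n) _ (le_max_of_le_left (norm_nonneg _)) h2
  have h4 : ‖D n‖ ≤ ‖(S.eval 0).comp (D n)‖ := by
    rcases le_max_iff.1 h3 with h | h
    · exact h
    · exact absurd hn (not_lt.2 h)
  exact ⟨n, lt_of_le_of_lt h1 (lt_of_lt_of_le hn h4)⟩

theorem backward (S : CoordSys Y) [Nontrivial X] (hB : HasBCP (StrongDual ℝ X)) :
    HasBCP (X →L[ℝ] Y) := by
  obtain ⟨d, hd⟩ := hasBCP_elim hB
  obtain ⟨x0, hx0⟩ := exists_ne (0 : X)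
  obtain ⟨g, hg1, -⟩ := exists_dual_vector ℝ x0 (norm_ne_zero_iff.2 hx0)
  have hTgne : (S.single 0).comp g ≠ 0 := by
    intro h
    have h2 : (S.eval 0).comp ((S.single 0).comp g) = 0 := by rw [h]; simp
    have h3 : g = 0 := by
      have : (S.eval 0).comp ((S.single 0).comp g) = g := by
        ext z; simp [S.eval_single_same]
      rwa [this] at h2
    rw [h3, norm_zero] at hg1; norm_num at hg1
  let E := Denumerable.eqv (ℕ × ℕ × ℚ)
  refine hasBCP_intro ((S.single 0).comp g) hTgne
    (fun m => ((((E.symm m).2.2 : ℚ) : ℝ)) • (S.single (E.symm m).1).comp (d (E.symm m).2.1))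
    (fun T hT => ?_)
  have hT1 : ‖T‖ = 1 := by simpa using hT
  have hhalf : ¬ ∀ x, ‖T x‖ ≤ (1/2 : ℝ) * ‖x‖ := by
    intro hco
    have := ContinuousLinearMap.opNorm_le_bound T (by norm_num) hco
    rw [hT1] at this; norm_num at this
  push_neg at hhalf
  obtain ⟨x, hx2⟩ := hhalf
  obtain ⟨k, hk⟩ := S.exists_coord (T x) hx2
  set f : StrongDual ℝ X := (S.eval k).comp T with hfdef
  have hxpos : 0 < ‖x‖ := by
    rcases eq_or_ne x 0 with rfl | hxne
    · exfalso; simp at hx2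
    · exact norm_pos_iff.2 hxne
  have hfx : ‖S.eval k (T x)‖ ≤ ‖f‖ * ‖x‖ := f.le_opNorm x
  have hfk_half : 1/2 < ‖f‖ := by
    by_contra hle
    push_neg at hle
    have : ‖f‖ * ‖x‖ ≤ (1/2) * ‖x‖ := mul_le_mul_of_nonneg_right hle (norm_nonneg x)
    linarith
  have hfpos : 0 < ‖f‖ := lt_trans (by norm_num) hfk_half
  have hfle1 : ‖f‖ ≤ 1 := hT1 ▸ S.norm_comp_eval_le k T
  have hmem : (‖f‖⁻¹ • f) ∈ sphere (0 : StrongDual ℝ X) 1 := by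
    simp [mem_sphere_zero_iff_norm, norm_smul, abs_of_pos (inv_pos.2 hfpos),
      inv_mul_cancel₀ hfpos.ne']
  obtain ⟨n, hn⟩ := hd _ hmem
  have hdn_pos : 0 < ‖d n‖ := lt_of_le_of_lt (norm_nonneg _) hn
  have hscale : ‖f - ‖f‖ • d n‖ < ‖f‖ * ‖d n‖ := by
    have heq : f - ‖f‖ • d n = ‖f‖ • (‖f‖⁻¹ • f - d n) := by
      rw [smul_sub, smul_inv_smul₀ hfpos.ne']
    rw [heq, norm_smul, Real.norm_eq_abs, abs_of_pos hfpos]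
    exact mul_lt_mul_of_pos_left hn hfpos
  obtain ⟨q, hq⟩ := exists_rat_gt (max 1 (1 / ‖d n‖))
  have hq1 : (1:ℝ) < (q:ℝ) := lt_of_le_of_lt (le_max_left _ _) hq
  have hqd : 1 < (q:ℝ) * ‖d n‖ := by
    have h1 : 1 / ‖d n‖ < (q:ℝ) := lt_of_le_of_lt (le_max_right _ _) hq
    have := mul_lt_mul_of_pos_right h1 hdn_pos
    rwa [one_div, inv_mul_cancel₀ hdn_pos.ne'] at this
  set C : X →L[ℝ] Y := ((q:ℝ)) • (S.single k).comp (d n) with hCdef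
  have hsc2 : ‖f - (q:ℝ) • d n‖ < (q:ℝ) * ‖d n‖ := by
    have heq : f - (q:ℝ) • d n = (f - ‖f‖ • d n) + (‖f‖ - (q:ℝ)) • d n := by
      rw [sub_smul (M := StrongDual ℝ X)]; abel
    calc ‖f - (q:ℝ) • d n‖ ≤ ‖f - ‖f‖ • d n‖ + ‖(‖f‖ - (q:ℝ)) • d n‖ := by
          rw [heq]; exact norm_add_le _ _
      _ = ‖f - ‖f‖ • d n‖ + ((q:ℝ) - ‖f‖) * ‖d n‖ := by
          rw [norm_smul, Real.norm_eq_abs, abs_of_nonpos (by linarith), neg_sub]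
      _ < ‖f‖ * ‖d n‖ + ((q:ℝ) - ‖f‖) * ‖d n‖ := by linarith
      _ = (q:ℝ) * ‖d n‖ := by ring
  have hPhiC_same : (S.eval k).comp C = (q:ℝ) • d n := by
    ext z
    simp [hCdef, S.eval_single_same]
  have hPhiC_ne : ∀ j, j ≠ k → (S.eval j).comp C = 0 := by
    intro j hj
    ext z
    simp [hCdef, S.eval_single_ne _ hj]
  have hTC : ‖T - C‖ < (q:ℝ) * ‖d n‖ := by
    have hb : ∀ j, ‖(S.eval j).comp (T - C)‖ ≤ max 1 ‖f - (q:ℝ) • d n‖ := by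
      intro j
      rw [ContinuousLinearMap.comp_sub]
      rcases eq_or_ne j k with rfl | hj
      · rw [hPhiC_same, ← hfdef]
        exact le_max_right _ _
      · rw [hPhiC_ne j hj, sub_zero]
        exact le_max_of_le_left ((S.norm_comp_eval_le j T).trans_eq hT1)
    have hle := S.opNorm_le (T - C) _ (le_max_of_le_left zero_le_one) hb
    exact lt_of_le_of_lt hle (max_lt hqd hsc2)
  have hCnorm : (q:ℝ) * ‖d n‖ ≤ ‖C‖ := by
    calc (q:ℝ) * ‖d n‖ = ‖(q:ℝ) • d n‖ := by
          rw [norm_smul, Real.norm_eq_abs, abs_of_pos (by linarith)]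
      _ = ‖(S.eval k).comp C‖ := by rw [hPhiC_same]
      _ ≤ ‖C‖ := S.norm_comp_eval_le k C
  refine ⟨E (k, n, q), ?_⟩
  simp only [Equiv.symm_apply_apply]
  exact lt_of_lt_of_le hTC hCnorm

end CoordSys

section Instances

noncomputable def lpEval (k : ℕ) : lp (fun _ : ℕ => ℝ) ⊤ →L[ℝ] ℝ :=
  LinearMap.mkContinuous
    { toFun := fun y => y k
      map_add' := fun y z => by
        show (↑(y + z) : ∀ _, ℝ) k = _
        rw [lp.coeFn_add]; rfl
      map_smul' := fun c y => by
        show (↑(c • y) : ∀ _, ℝ) k = _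
        rw [lp.coeFn_smul]; rfl }
    1 (fun y => by
      show ‖(y : ∀ _, ℝ) k‖ ≤ 1 * ‖y‖
      rw [one_mul]
      exact lp.norm_apply_le_norm ENNReal.top_ne_zero y k)

@[simp] theorem lpEval_apply (k : ℕ) (y : lp (fun _ : ℕ => ℝ) ⊤) :
    lpEval k y = y k := rfl

noncomputable def lpSingle (k : ℕ) : ℝ →L[ℝ] lp (fun _ : ℕ => ℝ) ⊤ :=
  LinearMap.mkContinuous
    { toFun := fun a => lp.single ⊤ k a
      map_add' := fun a b => by
        apply lp.ext
        funext j
        rw [lp.coeFn_add]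
        rcases eq_or_ne j k with rfl | hj
        · simp only [Pi.add_apply, lp.single_apply_self]
        · simp only [Pi.add_apply, lp.single_apply_ne ⊤ k _ hj, add_zero]
      map_smul' := fun c a => by
        have h := lp.single_smul (E := fun _ : ℕ => ℝ) ⊤ k c a
        exact h }
    1 (fun a => by
      show ‖lp.single (E := fun _ : ℕ => ℝ) ⊤ k a‖ ≤ 1 * ‖a‖
      rw [one_mul]
      refine lp.norm_le_of_forall_le (norm_nonneg a) fun j => ?_
      rcases eq_or_ne j k with rfl | hj
      · rw [lp.single_apply_self]
      · rw [lp.single_apply_ne ⊤ k _ hj]; simp)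

@[simp] theorem lpSingle_apply (k : ℕ) (a : ℝ) :
    lpSingle k a = lp.single ⊤ k a := rfl

/-- The coordinate system on `ℓ_∞`. -/
noncomputable def lpInftyCoordSys : CoordSys (lp (fun _ : ℕ => ℝ) ⊤) where
  eval := lpEval
  single := lpSingle
  eval_single_same k a := by
    rw [lpEval_apply, lpSingle_apply, lp.single_apply_self]
  eval_single_ne {j k} a hj := by
    rw [lpEval_apply, lpSingle_apply, lp.single_apply_ne ⊤ k _ hj]
  norm_eval_apply_le k y := by
    rw [lpEval_apply]
    exact lp.norm_apply_le_norm ENNReal.top_ne_zero y k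
  norm_single_le k a := by
    rw [lpSingle_apply]
    refine lp.norm_le_of_forall_le (norm_nonneg a) fun j => ?_
    rcases eq_or_ne j k with rfl | hj
    · rw [lp.single_apply_self]
    · rw [lp.single_apply_ne ⊤ k _ hj]; simp
  norm_le_of_forall y t ht h := by
    refine lp.norm_le_of_forall_le ht fun k => ?_
    simpa using h k

noncomputable def c0SingleFun (k : ℕ) (a : ℝ) : C₀(ℕ, ℝ) :=
  { toFun := fun j => if j = k then a else 0
    continuous_toFun := continuous_of_discreteTopology
    zero_at_infty' := by
      have hmem : {k}ᶜ ∈ Filter.cocompact ℕ :=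
        Filter.mem_cocompact.2 ⟨{k}, isCompact_singleton, le_refl _⟩
      refine Filter.Tendsto.congr' ?_ tendsto_const_nhds
      refine Filter.mem_of_superset hmem fun j hj => ?_
      exact (if_neg (Set.mem_compl_singleton_iff.1 hj)).symm }

@[simp] theorem c0SingleFun_apply (k : ℕ) (a : ℝ) (j : ℕ) :
    c0SingleFun k a j = if j = k then a else 0 := rfl

noncomputable def c0Eval (k : ℕ) : C₀(ℕ, ℝ) →L[ℝ] ℝ :=
  LinearMap.mkContinuous
    { toFun := fun y => y k
      map_add' := fun y z => by
        show (y + z) k = y k + z k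
        rw [ZeroAtInftyContinuousMap.add_apply]
      map_smul' := fun c y => by
        show (c • y) k = c • y k
        rw [ZeroAtInftyContinuousMap.smul_apply] }
    1 (fun y => by
      show ‖y k‖ ≤ 1 * ‖y‖
      rw [one_mul, ← ZeroAtInftyContinuousMap.norm_toBCF_eq_norm]
      exact y.toBCF.norm_coe_le_norm k)

@[simp] theorem c0Eval_apply (k : ℕ) (y : C₀(ℕ, ℝ)) : c0Eval k y = y k := rfl

theorem c0_norm_le_of_forall (y : C₀(ℕ, ℝ)) (t : ℝ) (ht : 0 ≤ t)
    (h : ∀ k, ‖y k‖ ≤ t) : ‖y‖ ≤ t := by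
  rw [← ZeroAtInftyContinuousMap.norm_toBCF_eq_norm]
  exact (BoundedContinuousFunction.norm_le ht).2 h

theorem norm_c0SingleFun_le (k : ℕ) (a : ℝ) : ‖c0SingleFun k a‖ ≤ ‖a‖ := by
  refine c0_norm_le_of_forall _ _ (norm_nonneg a) fun j => ?_
  rw [c0SingleFun_apply]
  rcases eq_or_ne j k with rfl | hj
  · rw [if_pos rfl]
  · rw [if_neg hj]; simp

noncomputable def c0Single (k : ℕ) : ℝ →L[ℝ] C₀(ℕ, ℝ) :=
  LinearMap.mkContinuous
    { toFun := fun a => c0SingleFun k a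
      map_add' := fun a b => by
        apply ZeroAtInftyContinuousMap.ext
        intro j
        rw [ZeroAtInftyContinuousMap.add_apply, c0SingleFun_apply, c0SingleFun_apply,
          c0SingleFun_apply]
        rcases eq_or_ne j k with rfl | hj
        · rw [if_pos rfl, if_pos rfl, if_pos rfl]
        · rw [if_neg hj, if_neg hj, if_neg hj, add_zero]
      map_smul' := fun c a => by
        apply ZeroAtInftyContinuousMap.ext
        intro j
        rw [RingHom.id_apply, ZeroAtInftyContinuousMap.smul_apply, c0SingleFun_apply,
          c0SingleFun_apply]
        rcases eq_or_ne j k with rfl | hj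
        · rw [if_pos rfl, if_pos rfl]
        · rw [if_neg hj, if_neg hj, smul_zero] }
    1 (fun a => by
      show ‖c0SingleFun k a‖ ≤ 1 * ‖a‖
      rw [one_mul]
      exact norm_c0SingleFun_le k a)

@[simp] theorem c0Single_apply (k : ℕ) (a : ℝ) (j : ℕ) :
    c0Single k a j = if j = k then a else 0 := rfl

/-- The coordinate system on `c₀`. -/
noncomputable def c0CoordSys : CoordSys C₀(ℕ, ℝ) where
  eval := c0Eval
  single := c0Single
  eval_single_same k a := by
    rw [c0Eval_apply, c0Single_apply, if_pos rfl]
  eval_single_ne {j k} a hj := by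
    rw [c0Eval_apply, c0Single_apply, if_neg hj]
  norm_eval_apply_le k y := by
    rw [c0Eval_apply, ← ZeroAtInftyContinuousMap.norm_toBCF_eq_norm]
    exact y.toBCF.norm_coe_le_norm k
  norm_single_le k a := norm_c0SingleFun_le k a
  norm_le_of_forall y t ht h := c0_norm_le_of_forall y t ht fun k => by simpa using h k

end Instances

theorem bcp_operators_into_linfty_and_c0_iff_dual
    (X : Type*) [NormedAddCommGroup X] [NormedSpace ℝ X] [CompleteSpace X] [Nontrivial X] :
    (HasBCP (X →L[ℝ] lp (fun _ : ℕ => ℝ) ⊤) ↔ HasBCP (StrongDual ℝ X)) ∧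
    (HasBCP (X →L[ℝ] C₀(ℕ, ℝ)) ↔ HasBCP (StrongDual ℝ X)) := by
  exact ⟨⟨lpInftyCoordSys.forward, lpInftyCoordSys.backward⟩,
    ⟨c0CoordSys.forward, c0CoordSys.backward⟩⟩
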